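/- Let u : [0,T] → ℝ^N be differentiable with u(0) = u_init and satisfy τ_i u_i'(t) = -u_i(t) + Σ_{j=1}^N ω_{ij} S(u_j(t) - u_θ) + q_i(t) for all t ∈ (0,T] and all i = 1,…,N, where 0 ≤ S(x) ≤ 1 for all x ∈ ℝ, each τ_i > 0, and |q_i(t)| ≤ B for all i and all t ∈ [0,T]. Then for every t ∈ (0,T], max_{1≤i≤N} |u_i'(t)| ≤ (min_{1≤i≤N} τ_i)^{-1} · ( max_{1≤i≤N} |u_{init,i}| + 2 max_{1≤i≤N} Σ_{j=1}^N |ω_{ij}| + 2B ). -/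
import Mathlib


open Set Finset Filter MeasureTheory

theorem stmt_1
    (N : ℕ) [NeZero N] (T : ℝ) (hT : 0 < T)
    (τ : Fin N → ℝ) (hτ : ∀ i, 0 < τ i)
    (ω : Fin N → Fin N → ℝ) (uθ : ℝ) (uinit : Fin N → ℝ)
    (S : ℝ → ℝ) (hS : ∀ x, S x ∈ Set.Icc (0:ℝ) 1)
    (q : ℝ → Fin N → ℝ) (hq_cont : ContinuousOn q (Set.Icc 0 T))
    (B : ℝ) (hB : 0 ≤ B) (hqB : ∀ t ∈ Set.Icc (0:ℝ) T, ∀ i, |q t i| ≤ B)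
    (u u' : ℝ → Fin N → ℝ)
    (hderiv : ∀ t ∈ Set.Icc (0:ℝ) T, HasDerivWithinAt u (u' t) (Set.Icc 0 T) t)
    (hinit : u 0 = uinit)
    (hODE : ∀ t ∈ Set.Ioc (0:ℝ) T, ∀ i,
      τ i * u' t i = -u t i + (∑ j, ω i j * S (u t j - uθ)) + q t i) :
    ∀ t ∈ Set.Ioc (0:ℝ) T, ∀ i, |u' t i| ≤
      (Finset.univ.inf' Finset.univ_nonempty τ)⁻¹ *
      ((Finset.univ.sup' Finset.univ_nonempty fun i => |uinit i|)
        + 2 * (Finset.univ.sup' Finset.univ_nonempty fun i => ∑ j, |ω i j|) + 2 * B) := by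
  intro t ht i
  have hτi0 : (0:ℝ) < τ i := hτ i
  set τi := τ i with hτidef
  set M0 := Finset.univ.sup' Finset.univ_nonempty (fun i => |uinit i|) with hM0def
  set Wsup := Finset.univ.sup' Finset.univ_nonempty (fun i => ∑ j, |ω i j|) with hWsupdef
  set τmin := Finset.univ.inf' Finset.univ_nonempty τ with hτmindef
  set W := ∑ j, |ω i j| with hWdef
  have hM0i : |uinit i| ≤ M0 := by rw [hM0def]; exact Finset.le_sup' (fun i => |uinit i|) (Finset.mem_univ i)
  have hM0nn : 0 ≤ M0 := (abs_nonneg _).trans hM0i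
  have hWnn : 0 ≤ W := Finset.sum_nonneg fun _ _ => abs_nonneg _
  have hWle : W ≤ Wsup := by rw [hWsupdef, hWdef]; exact Finset.le_sup' (fun i => ∑ j, |ω i j|) (Finset.mem_univ i)
  have hτminle : τmin ≤ τi := by rw [hτmindef, hτidef]; exact Finset.inf'_le _ (Finset.mem_univ i)
  have hτminpos : 0 < τmin := by
    rw [hτmindef, Finset.lt_inf'_iff]
    exact fun j _ => hτ j
  set C := M0 + W + B with hCdef
  -- bound on the source term
  have hf : ∀ s ∈ Set.Icc (0:ℝ) T, |(∑ j, ω i j * S (u s j - uθ)) + q s i| ≤ W + B := by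
    intro s hs
    refine (abs_add_le _ _).trans (add_le_add ?_ (hqB s hs i))
    refine (Finset.abs_sum_le_sum_abs _ _).trans ?_
    refine Finset.sum_le_sum fun j _ => ?_
    rw [abs_mul]
    have hSj := hS (u s j - uθ)
    calc |ω i j| * |S (u s j - uθ)| ≤ |ω i j| * 1 := by
          apply mul_le_mul_of_nonneg_left _ (abs_nonneg _)
          rw [abs_le]
          exact ⟨by linarith [hSj.1], hSj.2⟩
      _ = |ω i j| := mul_one _
  -- continuity
  have hu_cont : ContinuousOn u (Set.Icc 0 T) := fun s hs => (hderiv s hs).continuousWithinAt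
  have hui_cont : ContinuousOn (fun s => u s i) (Set.Icc 0 T) :=
    (continuous_apply i).comp_continuousOn hu_cont
  -- coordinate derivative at interior points
  have hui : ∀ s ∈ Set.Ioo (0:ℝ) T, HasDerivAt (fun r => u r i) (u' s i) s := by
    intro s hs
    have h := (hderiv s (Set.Ioo_subset_Icc_self hs)).hasDerivAt (Icc_mem_nhds hs.1 hs.2)
    exact (hasDerivAt_pi.mp h) i
  have hexp : ∀ s : ℝ, HasDerivAt (fun r : ℝ => Real.exp (r / τi))
      (Real.exp (s / τi) * (1 / τi)) s := fun s => ((hasDerivAt_id s).div_const τi).exp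
  have hexp_cont : ContinuousOn (fun r : ℝ => Real.exp (r / τi)) (Set.Icc 0 T) :=
    (Real.continuous_exp.comp (continuous_id.div_const τi)).continuousOn
  have h0m : (0:ℝ) ∈ Set.Icc 0 T := ⟨le_refl 0, hT.le⟩
  have htm : t ∈ Set.Icc 0 T := Set.Ioc_subset_Icc_self ht
  have hexp_pos := Real.exp_pos (t / τi)
  -- u' formula on interior
  have hu'eq : ∀ s ∈ Set.Ioc (0:ℝ) T,
      u' s i = (-u s i + (∑ j, ω i j * S (u s j - uθ)) + q s i) / τi := by
    intro s hs
    have h := hODE s hs i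
    field_simp
    linarith [h]
  -- upper bound: u t i ≤ C
  have hup : u t i ≤ C := by
    set ψ : ℝ → ℝ := fun s => Real.exp (s / τi) * (u s i - C) with hψdef
    have hψderiv : ∀ s ∈ Set.Ioo (0:ℝ) T, HasDerivAt ψ
        (Real.exp (s / τi) * (1 / τi) * (u s i - C) + Real.exp (s / τi) * u' s i) s :=
      fun s hs => (hexp s).mul ((hui s hs).sub_const C)
    have hψcont : ContinuousOn ψ (Set.Icc 0 T) :=
      hexp_cont.mul (hui_cont.sub continuousOn_const)
    have hψdiff : DifferentiableOn ℝ ψ (interior (Set.Icc 0 T)) := by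
      rw [interior_Icc]
      exact fun s hs => ((hψderiv s hs).differentiableAt).differentiableWithinAt
    have hψ0 : ∀ s ∈ interior (Set.Icc (0:ℝ) T), deriv ψ s ≤ 0 := by
      rw [interior_Icc]
      intro s hs
      rw [(hψderiv s hs).deriv]
      rw [hu'eq s ⟨hs.1, hs.2.le⟩]
      have hb := abs_le.mp (hf s (Set.Ioo_subset_Icc_self hs))
      have hE := Real.exp_pos (s / τi)
      have key : Real.exp (s / τi) * (1 / τi) * (u s i - C)
          + Real.exp (s / τi) * ((-u s i + (∑ j, ω i j * S (u s j - uθ)) + q s i) / τi)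
          = Real.exp (s / τi) / τi * ((∑ j, ω i j * S (u s j - uθ)) + q s i - C) := by
        field_simp
        ring
      rw [key]
      apply mul_nonpos_of_nonneg_of_nonpos (by positivity)
      linarith [hb.2]
    have hanti := antitoneOn_of_deriv_nonpos (convex_Icc 0 T) hψcont hψdiff hψ0
    have h1 : ψ t ≤ ψ 0 := hanti h0m htm ht.1.le
    have h2 : ψ 0 = uinit i - C := by simp [hψdef, hinit]
    have h3 : uinit i - C ≤ 0 := by
      have := le_abs_self (uinit i); simp only [hCdef]; linarith
    rw [h2] at h1
    have h1' : Real.exp (t / τi) * (u t i - C) ≤ uinit i - C := h1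
    nlinarith [hexp_pos, h1', h3]
  -- lower bound: -C ≤ u t i
  have hlow : -C ≤ u t i := by
    set φ : ℝ → ℝ := fun s => Real.exp (s / τi) * (u s i + C) with hφdef
    have hφderiv : ∀ s ∈ Set.Ioo (0:ℝ) T, HasDerivAt φ
        (Real.exp (s / τi) * (1 / τi) * (u s i + C) + Real.exp (s / τi) * u' s i) s :=
      fun s hs => (hexp s).mul ((hui s hs).add_const C)
    have hφcont : ContinuousOn φ (Set.Icc 0 T) :=
      hexp_cont.mul (hui_cont.add continuousOn_const)
    have hφdiff : DifferentiableOn ℝ φ (interior (Set.Icc 0 T)) := by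
      rw [interior_Icc]
      exact fun s hs => ((hφderiv s hs).differentiableAt).differentiableWithinAt
    have hφ0 : ∀ s ∈ interior (Set.Icc (0:ℝ) T), 0 ≤ deriv φ s := by
      rw [interior_Icc]
      intro s hs
      rw [(hφderiv s hs).deriv]
      rw [hu'eq s ⟨hs.1, hs.2.le⟩]
      have hb := abs_le.mp (hf s (Set.Ioo_subset_Icc_self hs))
      have hE := Real.exp_pos (s / τi)
      have key : Real.exp (s / τi) * (1 / τi) * (u s i + C)
          + Real.exp (s / τi) * ((-u s i + (∑ j, ω i j * S (u s j - uθ)) + q s i) / τi)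
          = Real.exp (s / τi) / τi * ((∑ j, ω i j * S (u s j - uθ)) + q s i + C) := by
        field_simp
        ring
      rw [key]
      apply mul_nonneg (by positivity)
      linarith [hb.1]
    have hmono := monotoneOn_of_deriv_nonneg (convex_Icc 0 T) hφcont hφdiff hφ0
    have h1 : φ 0 ≤ φ t := hmono h0m htm ht.1.le
    have h2 : φ 0 = uinit i + C := by simp [hφdef, hinit]
    have h3 : 0 ≤ uinit i + C := by
      have := neg_abs_le (uinit i); simp only [hCdef]; linarith
    rw [h2] at h1
    have h1' : uinit i + C ≤ Real.exp (t / τi) * (u t i + C) := h1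
    nlinarith [hexp_pos, h1', h3]
  -- final bound
  have hWsupnn : 0 ≤ Wsup := hWnn.trans hWle
  have hRHS : |(-u t i + (∑ j, ω i j * S (u t j - uθ)) + q t i)| ≤ M0 + 2 * W + 2 * B := by
    have h1 : |(-u t i + (∑ j, ω i j * S (u t j - uθ)) + q t i)|
        ≤ |(-u t i)| + |(∑ j, ω i j * S (u t j - uθ)) + q t i| := by
      rw [add_assoc]
      exact abs_add_le _ _
    rw [abs_neg] at h1
    have h2 := hf t htm
    have h3 : |u t i| ≤ C := abs_le.mpr ⟨by linarith, hup⟩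
    simp only [hCdef] at h3
    linarith
  have habs : |u' t i| ≤ (M0 + 2 * W + 2 * B) / τi := by
    rw [hu'eq t ht, abs_div, abs_of_pos hτi0]
    gcongr
  calc |u' t i| ≤ (M0 + 2 * W + 2 * B) / τi := habs
    _ ≤ (M0 + 2 * Wsup + 2 * B) / τmin :=
        div_le_div₀ (by linarith) (by linarith) hτminpos hτminle
    _ = τmin⁻¹ * (M0 + 2 * Wsup + 2 * B) := by rw [inv_mul_eq_div]
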